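/- Let α > 1. The function θ_α(t) = arccos((1−α²)/√((α²−1)(α²+t²−1))) has right derivative at t = 0 (derivative within the set [0, ∞) at the point 0) equal to −1/√(α²−1). In particular, this derivative is nonzero. -/

import Mathlib

open Real Set

lemma arccos_inv_sqrt_one_add_sq {x : ℝ} (hx : 0 ≤ x) :
    Real.arccos (1 / Real.sqrt (1 + x ^ 2)) = Real.arctan x := by
  rw [← Real.cos_arctan x]
  have h0 : 0 ≤ Real.arctan x := by
    rw [← Real.arctan_zero]
    exact Real.arctan_strictMono.monotone hx
  exact Real.arccos_cos h0
    ((Real.arctan_lt_pi_div_two x).le.trans (by linarith [Real.pi_pos]))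

/-- For α > 1, the function θ_α(t) = arccos((1−α²)/√((α²−1)(α²+t²−1))) has derivative
    within [0, ∞) at 0 equal to −1/√(α²−1), and this derivative is nonzero. -/
theorem theta_hasDerivWithinAt_zero (α : ℝ) (hα : 1 < α) :
    HasDerivWithinAt
      (fun t : ℝ => Real.arccos ((1 - α ^ 2) / Real.sqrt ((α ^ 2 - 1) * (α ^ 2 + t ^ 2 - 1))))
      (-1 / Real.sqrt (α ^ 2 - 1)) (Set.Ici 0) 0 ∧
    (-1 / Real.sqrt (α ^ 2 - 1)) ≠ 0 := by
  set a := α ^ 2 - 1 with ha_def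
  have ha : 0 < a := by nlinarith
  have hsa : 0 < Real.sqrt a := Real.sqrt_pos.2 ha
  constructor
  · -- g t = π - arctan (t / √a)
    have hg : HasDerivAt (fun t : ℝ => Real.pi - Real.arctan (t / Real.sqrt a))
        (-1 / Real.sqrt a) 0 := by
      have h1 : HasDerivAt (fun t : ℝ => t / Real.sqrt a) (1 / Real.sqrt a) 0 := by
        simpa using (hasDerivAt_id (0 : ℝ)).div_const (Real.sqrt a)
      have h2 := h1.arctan
      have h3 := h2.const_sub Real.pi
      refine h3.congr_deriv ?_
      rw [neg_div, one_div]
      norm_num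
    refine (hg.hasDerivWithinAt).congr (fun t ht => ?_) ?_
    · -- show equality on Ici 0
      have ht0 : (0 : ℝ) ≤ t := ht
      have hat : 0 < a + t ^ 2 := by positivity
      have h1 : α ^ 2 + t ^ 2 - 1 = a + t ^ 2 := by ring
      have h2 : Real.sqrt (a * (a + t ^ 2)) = Real.sqrt a * Real.sqrt (a + t ^ 2) :=
        Real.sqrt_mul ha.le _
      have h3 : (1 - α ^ 2) = -a := by ring
      have key : (1 - α ^ 2) / Real.sqrt (a * (a + t ^ 2))
          = -(1 / Real.sqrt (1 + (t / Real.sqrt a) ^ 2)) := by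
        rw [h3, h2]
        have hsq : Real.sqrt (1 + (t / Real.sqrt a) ^ 2)
            = Real.sqrt (a + t ^ 2) / Real.sqrt a := by
          rw [← Real.sqrt_div' _ ha.le]
          congr 1
          field_simp
          rw [Real.sq_sqrt ha.le]
          ring
        rw [hsq]
        have hs2 : Real.sqrt (a + t ^ 2) ≠ 0 := (Real.sqrt_pos.2 hat).ne'
        have hAa : Real.sqrt a * Real.sqrt a = a := Real.mul_self_sqrt ha.le
        field_simp
        rw [Real.sq_sqrt ha.le]
      simp only [h1, key, Real.arccos_neg]
      rw [arccos_inv_sqrt_one_add_sq (by positivity)]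
    · -- values at 0 agree
      have h1 : α ^ 2 + 0 ^ 2 - 1 = a := by ring
      have : (1 - α ^ 2) / Real.sqrt (a * a) = -1 := by
        rw [Real.sqrt_mul_self ha.le]
        field_simp
        ring
      simp [h1, this, Real.arccos_neg_one]
      rw [← ha_def, this]
  · have : Real.sqrt a ≠ 0 := hsa.ne'
    simp [this]
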